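/- There exists a partial order on ℕ whose coded set is c.e. and which is not isomorphic to any partial order on ℕ whose coded set is computable. -/

import Mathlib

namespace CEOrders

/-- The coded set of a binary relation on ℕ, via the pairing function `Nat.pair`. -/
def codedSet (R : ℕ → ℕ → Prop) : Set ℕ := {n | R n.unpair.1 n.unpair.2}

/-- A set of naturals is c.e. (computably enumerable). -/
def SetCE (A : Set ℕ) : Prop := REPred (· ∈ A)

/-- A set of naturals is co-c.e. -/
def SetCoCE (A : Set ℕ) : Prop := REPred (· ∉ A)

/-- A set of naturals is computable. -/
def SetComputable (A : Set ℕ) : Prop := ComputablePred (· ∈ A)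

/-- A partial order on ℕ: reflexive, antisymmetric, transitive. -/
def PartialOrderRel (R : ℕ → ℕ → Prop) : Prop :=
  (∀ a, R a a) ∧ (∀ a b, R a b → R b a → a = b) ∧ (∀ a b c, R a b → R b c → R a c)

/-- A preorder on ℕ: reflexive, transitive. -/
def PreorderRel (R : ℕ → ℕ → Prop) : Prop :=
  (∀ a, R a a) ∧ (∀ a b c, R a b → R b c → R a c)

/-- A (simple, undirected) graph on ℕ: irreflexive, symmetric. -/
def GraphRel (R : ℕ → ℕ → Prop) : Prop :=
  (∀ a, ¬ R a a) ∧ (∀ a b, R a b → R b a)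

/-- Isomorphism of binary relations on ℕ. -/
def Isomorphic (R Q : ℕ → ℕ → Prop) : Prop :=
  ∃ f : ℕ → ℕ, Function.Bijective f ∧ ∀ a b, R a b ↔ Q (f a) (f b)

/-- A chain for a relation: any two elements comparable. -/
def ChainFor (R : ℕ → ℕ → Prop) (C : Set ℕ) : Prop :=
  ∀ a ∈ C, ∀ b ∈ C, R a b ∨ R b a

/-- An antichain for a relation: any two distinct elements incomparable. -/
def AntichainFor (R : ℕ → ℕ → Prop) (C : Set ℕ) : Prop :=
  ∀ a ∈ C, ∀ b ∈ C, a ≠ b → ¬ R a b ∧ ¬ R b a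

/-- Partial functions computable relative to an oracle `g`. -/
inductive RecursiveIn (g : ℕ →. ℕ) : (ℕ →. ℕ) → Prop
  | zero : RecursiveIn g (pure 0)
  | succ : RecursiveIn g Nat.succ
  | left : RecursiveIn g ↑fun n : ℕ => n.unpair.1
  | right : RecursiveIn g ↑fun n : ℕ => n.unpair.2
  | oracle : RecursiveIn g g
  | pair {f h} : RecursiveIn g f → RecursiveIn g h →
      RecursiveIn g fun n => Nat.pair <$> f n <*> h n
  | comp {f h} : RecursiveIn g f → RecursiveIn g h →
      RecursiveIn g fun n => h n >>= f
  | prec {f h} : RecursiveIn g f → RecursiveIn g h →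
      RecursiveIn g (Nat.unpaired fun a n =>
        n.rec (f a) fun y IH => do let i ← IH; h (Nat.pair a (Nat.pair y i)))
  | rfind {f} : RecursiveIn g f →
      RecursiveIn g fun a => Nat.rfind fun n => (fun m => m = 0) <$> f (Nat.pair a n)

open Classical in
/-- The characteristic (partial) function of a set of naturals. -/
noncomputable def charFun (A : Set ℕ) : ℕ →. ℕ :=
  fun n => Part.some (if n ∈ A then 1 else 0)

/-- Turing reducibility between sets of naturals. -/
def TuringLE (A B : Set ℕ) : Prop := RecursiveIn (charFun B) (charFun A)

/-- Turing equivalence between sets of naturals. -/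
def TuringEquiv (A B : Set ℕ) : Prop := TuringLE A B ∧ TuringLE B A

/-- The halting set ∅'. -/
def HaltingSet : Set ℕ :=
  {n | ((Denumerable.ofNat Nat.Partrec.Code n).eval n).Dom}

/-- A relation on ℕ is automorphically nontrivial. -/
def AutNontrivial (R : ℕ → ℕ → Prop) : Prop :=
  ¬ ∃ F : Finset ℕ, ∀ f : ℕ → ℕ, Function.Bijective f → (∀ x ∈ F, f x = x) →
      ∀ a b, R a b ↔ R (f a) (f b)

/-! ### Construction of the c.e. partial order -/

open Nat.Partrec (Code)
open Nat.Partrec.Code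

/-- The (non-diagonal) halting set we encode. -/
def K0 (n : ℕ) : Prop := ((Denumerable.ofNat Code n).eval 0).Dom

/-- Base (decidable) strict edges of component `n`: `x` below `y` (indices inside a component). -/
def bedge (n x y : ℕ) : Prop :=
  (n+2 ≤ x ∧ x ≤ 2*n+2 ∧ (x = y+n+2 ∨ x = y+n+1)) ∨
  (2*n+3 ≤ x ∧ x ≤ 2*n+5 ∧ y = 0) ∨
  ((x = 2*n+6 ∨ x = 2*n+7) ∧ y = n+1)

/-- The c.e. partial order. -/
def P0 (a b : ℕ) : Prop :=
  a = b ∨ (a.unpair.1 = b.unpair.1 ∧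
    (bedge a.unpair.1 a.unpair.2 b.unpair.2 ∨
      (a.unpair.2 = 2*a.unpair.1+7 ∧ b.unpair.2 = 2*a.unpair.1+6 ∧ K0 a.unpair.1)))

/-- Strict-relation condition within a component. -/
def D (m x y : ℕ) : Prop := bedge m x y ∨ (x = 2*m+7 ∧ y = 2*m+6 ∧ K0 m)

lemma Dc {m x y : ℕ} (h : D m x y) : bedge m x y ∨ (x = 2*m+7 ∧ y = 2*m+6) := by
  rcases h with h | ⟨h1, h2, _⟩
  · exact Or.inl h
  · exact Or.inr ⟨h1, h2⟩

lemma bedge_facts {n x y : ℕ} (h : bedge n x y) : y < x ∧ n+2 ≤ x ∧ y ≤ n+1 := by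
  unfold bedge at h; omega

lemma D_ne {m x y : ℕ} (h : D m x y) : x ≠ y := by
  rcases Dc h with h | h
  · have := bedge_facts h; omega
  · omega

lemma P0_po : PartialOrderRel P0 := by
  refine ⟨fun a => Or.inl rfl, ?_, ?_⟩
  · intro a b hab hba
    rcases hab with h | ⟨hn1, h1⟩; · exact h
    rcases hba with h | ⟨hn2, h2⟩; · exact h.symm
    exfalso
    rw [hn2] at h2
    rcases h1 with h1 | ⟨e1, e2, -⟩ <;> rcases h2 with h2 | ⟨e1', e2', -⟩
    · have := bedge_facts h1; have := bedge_facts h2; omega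
    · have := bedge_facts h1; omega
    · have := bedge_facts h2; omega
    · omega
  · intro a b c hab hbc
    rcases hbc with h | ⟨hn2, h2⟩; · rwa [← h]
    rcases hab with h | ⟨hn1, h1⟩; · subst h; exact Or.inr ⟨hn2, h2⟩
    rw [← hn1] at hn2 h2
    rcases h1 with h1 | ⟨e1, e2, hK⟩
    · exfalso
      have hf1 := bedge_facts h1
      rcases h2 with h2 | ⟨e1', e2', -⟩
      · have := bedge_facts h2; omega
      · omega
    · rcases h2 with h2 | ⟨e1', e2', -⟩
      · rw [e2] at h2
        have hc : c.unpair.2 = a.unpair.1 + 1 := by unfold bedge at h2; omega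
        refine Or.inr ⟨hn2, Or.inl ?_⟩
        unfold bedge; omega
      · exfalso; omega

lemma below_iff {m y z : ℕ} :
    (P0 z (Nat.pair m y) ∧ z ≠ Nat.pair m y) ↔ ∃ x, z = Nat.pair m x ∧ D m x y := by
  constructor
  · rintro ⟨h, hne⟩
    rcases h with h | ⟨h1, h2⟩
    · exact absurd h hne
    · simp only [Nat.unpair_pair] at h1 h2
      refine ⟨z.unpair.2, ?_, ?_⟩
      · rw [← h1, Nat.pair_unpair]
      · rw [h1] at h2; exact h2
  · rintro ⟨x, rfl, h⟩
    refine ⟨Or.inr ⟨?_, ?_⟩, ?_⟩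
    · simp only [Nat.unpair_pair]
    · simp only [Nat.unpair_pair]; exact h
    · simp only [ne_eq, Nat.pair_eq_pair, not_and]
      intro _; exact D_ne h

lemma above_iff {m x z : ℕ} :
    (P0 (Nat.pair m x) z ∧ Nat.pair m x ≠ z) ↔ ∃ y, z = Nat.pair m y ∧ D m x y := by
  constructor
  · rintro ⟨h, hne⟩
    rcases h with h | ⟨h1, h2⟩
    · exact absurd h hne
    · simp only [Nat.unpair_pair] at h1 h2
      refine ⟨z.unpair.2, ?_, ?_⟩
      · rw [h1, Nat.pair_unpair]
      · exact h2
  · rintro ⟨y, rfl, h⟩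
    refine ⟨Or.inr ⟨?_, ?_⟩, ?_⟩
    · simp only [Nat.unpair_pair]
    · simp only [Nat.unpair_pair]; exact h
    · simp only [ne_eq, Nat.pair_eq_pair, not_and]
      intro _; exact D_ne h

lemma P0_of_bedge {n i j : ℕ} (h : bedge n i j) : P0 (Nat.pair n i) (Nat.pair n j) := by
  refine Or.inr ⟨?_, ?_⟩ <;> simp only [Nat.unpair_pair]
  exact Or.inl h

lemma P0_rr (n : ℕ) : P0 (Nat.pair n (2*n+7)) (Nat.pair n (2*n+6)) ↔ K0 n := by
  constructor
  · rintro (h | ⟨-, h⟩)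
    · exact absurd (Nat.pair_eq_pair.mp h).2 (by omega)
    · simp only [Nat.unpair_pair] at h
      rcases h with h | h
      · exact absurd (bedge_facts h) (by omega)
      · exact h.2.2
  · intro h
    refine Or.inr ⟨?_, Or.inr ⟨?_, ?_, ?_⟩⟩
    · simp
    · simp
    · simp
    · simpa using h

lemma P0_rr' (n : ℕ) : ¬ P0 (Nat.pair n (2*n+6)) (Nat.pair n (2*n+7)) := by
  rintro (h | ⟨-, h⟩)
  · exact absurd (Nat.pair_eq_pair.mp h).2 (by omega)
  · simp only [Nat.unpair_pair] at h
    rcases h with h | h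
    · exact absurd (bedge_facts h) (by omega)
    · omega
lemma below_char {m x y : ℕ} (h : D m x y) (hy : y ≠ 0) :
    (y ≤ m ∧ (x = y+m+2 ∨ x = y+m+1)) ∨
    (y = m+1 ∧ (x = 2*m+2 ∨ x = 2*m+6 ∨ x = 2*m+7)) ∨
    (y = 2*m+6 ∧ x = 2*m+7) := by
  rcases Dc h with h | h
  · unfold bedge at h; omega
  · omega
lemma rigid (n : ℕ) (ρ : ℕ → ℕ)
    (hinj : ∀ i j, i < 2*n+8 → j < 2*n+8 → i ≠ j → ρ i ≠ ρ j)
    (hedge : ∀ i j, i < 2*n+8 → j < 2*n+8 → bedge n i j → P0 (ρ i) (ρ j)) :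
    (ρ (2*n+6) = Nat.pair n (2*n+6) ∧ ρ (2*n+7) = Nat.pair n (2*n+7)) ∨
    (ρ (2*n+6) = Nat.pair n (2*n+7) ∧ ρ (2*n+7) = Nat.pair n (2*n+6)) := by
  obtain ⟨m, y0, hρ0⟩ : ∃ m y0, ρ 0 = Nat.pair m y0 :=
    ⟨(ρ 0).unpair.1, (ρ 0).unpair.2, (Nat.pair_unpair _).symm⟩
  have step : ∀ i j y, i < 2*n+8 → j < 2*n+8 → bedge n i j → ρ j = Nat.pair m y →
      ∃ x, ρ i = Nat.pair m x ∧ D m x y := by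
    intro i j y hi hj hb hj'
    have hne : ρ i ≠ ρ j := hinj i j hi hj (by have := bedge_facts hb; omega)
    exact below_iff.mp ⟨hj' ▸ hedge i j hi hj hb, hj' ▸ hne⟩
  have stepU : ∀ i j x, i < 2*n+8 → j < 2*n+8 → bedge n i j → ρ i = Nat.pair m x →
      ∃ y, ρ j = Nat.pair m y ∧ D m x y := by
    intro i j x hi hj hb hi'
    have hne : ρ i ≠ ρ j := hinj i j hi hj (by have := bedge_facts hb; omega)
    exact above_iff.mp ⟨hi' ▸ hedge i j hi hj hb, hi' ▸ hne⟩
  -- Step A: identify the images of the variables 0 (flagged end top), 1, and n+2 (= B₁).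
  obtain ⟨xb, hxb, hdb⟩ := step (n+2) 0 y0 (by omega) (by omega) (by unfold bedge; omega) hρ0
  obtain ⟨x3, hx3, hd3⟩ := step (2*n+3) 0 y0 (by omega) (by omega) (by unfold bedge; omega) hρ0
  obtain ⟨x4, hx4, hd4⟩ := step (2*n+4) 0 y0 (by omega) (by omega) (by unfold bedge; omega) hρ0
  obtain ⟨x5, hx5, hd5⟩ := step (2*n+5) 0 y0 (by omega) (by omega) (by unfold bedge; omega) hρ0
  obtain ⟨y1, hy1, hdy1⟩ := stepU (n+2) 1 xb (by omega) (by omega) (by unfold bedge; omega) hxb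
  have dxb3 : xb ≠ x3 := fun h =>
    hinj (n+2) (2*n+3) (by omega) (by omega) (by omega) (by rw [hxb, hx3, h])
  have dxb4 : xb ≠ x4 := fun h =>
    hinj (n+2) (2*n+4) (by omega) (by omega) (by omega) (by rw [hxb, hx4, h])
  have dxb5 : xb ≠ x5 := fun h =>
    hinj (n+2) (2*n+5) (by omega) (by omega) (by omega) (by rw [hxb, hx5, h])
  have d34 : x3 ≠ x4 := fun h =>
    hinj (2*n+3) (2*n+4) (by omega) (by omega) (by omega) (by rw [hx3, hx4, h])
  have d35 : x3 ≠ x5 := fun h =>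
    hinj (2*n+3) (2*n+5) (by omega) (by omega) (by omega) (by rw [hx3, hx5, h])
  have d45 : x4 ≠ x5 := fun h =>
    hinj (2*n+4) (2*n+5) (by omega) (by omega) (by omega) (by rw [hx4, hx5, h])
  have dy10 : y1 ≠ y0 := fun h =>
    hinj 1 0 (by omega) (by omega) (by omega) (by rw [hy1, hρ0, h])
  have hy0 : y0 = 0 := by
    by_contra hy
    have c1 := below_char hdb hy
    have c2 := below_char hd3 hy
    have c3 := below_char hd4 hy
    have c4 := below_char hd5 hy
    omega
  have h0 : y0 = 0 ∧ xb = m+2 ∧ y1 = 1 := by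
    have c1 := Dc hdb; have c5 := Dc hdy1
    rw [hy0] at c1
    refine ⟨hy0, ?_⟩
    rw [hy0] at dy10
    unfold bedge at c1 c5; omega
  rw [h0.1] at hρ0
  rw [h0.2.1] at hxb
  rw [h0.2.2] at hy1
  clear hdb hd3 hd4 hd5 hdy1 dxb3 dxb4 dxb5 d34 d35 d45 dy10 h0
  -- the inductive walk along the fence
  have main : ∀ i, 1 ≤ i → i ≤ n+1 → i ≤ m+1 →
      ρ i = Nat.pair m i ∧ ρ (n+1+i) = Nat.pair m (m+1+i) := by
    intro i
    induction i with
    | zero => intro h; exact absurd h (by omega)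
    | succ i ih =>
      intro h1 h2 h3
      rcases Nat.eq_zero_or_pos i with rfl | hi
      · refine ⟨hy1, ?_⟩
        have e1 : n+1+1 = n+2 := rfl
        rw [e1, hxb]
      · obtain ⟨hti, hbi⟩ := ih (by omega) (by omega) (by omega)
        obtain ⟨xb', hxb', hdb'⟩ :=
          step (n+2+i) i i (by omega) (by omega) (by unfold bedge; omega) hti
        have hne1 : xb' ≠ m+1+i := fun h =>
          hinj (n+2+i) (n+1+i) (by omega) (by omega) (by omega) (by rw [hxb', hbi, h])
        have hxb'' : xb' = m+2+i := by
          have := Dc hdb'; unfold bedge at this; omega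
        rw [hxb''] at hxb'
        obtain ⟨y', hy', hdy'⟩ :=
          stepU (n+2+i) (i+1) (m+2+i) (by omega) (by omega) (by unfold bedge; omega) hxb'
        have hne2 : y' ≠ i := fun h =>
          hinj (i+1) i (by omega) (by omega) (by omega) (by rw [hy', hti, h])
        have hy'' : y' = i+1 := by
          have := Dc hdy'; unfold bedge at this; omega
        rw [hy''] at hy'
        refine ⟨hy', ?_⟩
        have e1 : n+1+(i+1) = n+2+i := by omega
        have e2 : m+1+(i+1) = m+2+i := by omega
        rw [e1, e2, hxb']
  rcases lt_trichotomy m n with hlt | heq | hgt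
  · -- m < n : impossible
    exfalso
    obtain ⟨ht1, hb1⟩ := main (m+1) (by omega) (by omega) (by omega)
    have e1 : n+1+(m+1) = n+m+2 := by omega
    have e2 : m+1+(m+1) = 2*m+2 := by omega
    rw [e1, e2] at hb1
    obtain ⟨x', hx', hdx'⟩ :=
      step (n+m+3) (m+1) (m+1) (by omega) (by omega) (by unfold bedge; omega) ht1
    have hne : x' ≠ 2*m+2 := fun h =>
      hinj (n+m+3) (n+m+2) (by omega) (by omega) (by omega) (by rw [hx', hb1, h])
    have hx'' : x' = 2*m+6 ∨ x' = 2*m+7 := by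
      have := Dc hdx'; unfold bedge at this; omega
    obtain ⟨y'', hy'', hdy''⟩ :=
      stepU (n+m+3) (m+2) x' (by omega) (by omega) (by unfold bedge; omega) hx'
    have hne2 : y'' ≠ m+1 := fun h =>
      hinj (m+2) (m+1) (by omega) (by omega) (by omega) (by rw [hy'', ht1, h])
    have hxy : x' = 2*m+7 ∧ y'' = 2*m+6 := by
      have := Dc hdy''; unfold bedge at this; omega
    rcases Nat.lt_or_ge (m+2) (n+1) with hc | hc
    · -- there is a further fence variable; it has nowhere to go
      rw [hxy.2] at hy''
      obtain ⟨x''', hx''', hdx'''⟩ :=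
        step (n+m+4) (m+2) (2*m+6) (by omega) (by omega) (by unfold bedge; omega) hy''
      have hx4' : x''' = 2*m+7 := by
        have := Dc hdx'''; unfold bedge at this; omega
      refine hinj (n+m+4) (n+m+3) (by omega) (by omega) (by omega) ?_
      rw [hx''', hx4', hx', hxy.1]
    · -- m+2 = n+1 : the two r-variables must both go to the single point below r₁
      have hmn2 : m+2 = n+1 := by omega
      have hn1 : ρ (n+1) = Nat.pair m (2*m+6) := by rw [← hmn2, hy'', hxy.2]
      obtain ⟨x6, hx6, hd6⟩ :=
        step (2*n+6) (n+1) (2*m+6) (by omega) (by omega) (by unfold bedge; omega) hn1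
      obtain ⟨x7, hx7, hd7⟩ :=
        step (2*n+7) (n+1) (2*m+6) (by omega) (by omega) (by unfold bedge; omega) hn1
      have hx6' : x6 = 2*m+7 := by
        have := Dc hd6; unfold bedge at this; omega
      have hx7' : x7 = 2*m+7 := by
        have := Dc hd7; unfold bedge at this; omega
      refine hinj (2*n+6) (2*n+7) (by omega) (by omega) (by omega) ?_
      rw [hx6, hx7, hx6', hx7']
  · -- m = n : conclusion
    subst heq
    obtain ⟨ht1, hb1⟩ := main (m+1) (by omega) (by omega) (by omega)
    have e1 : m+1+(m+1) = 2*m+2 := by omega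
    rw [e1] at hb1
    obtain ⟨x6, hx6, hd6⟩ :=
      step (2*m+6) (m+1) (m+1) (by omega) (by omega) (by unfold bedge; omega) ht1
    obtain ⟨x7, hx7, hd7⟩ :=
      step (2*m+7) (m+1) (m+1) (by omega) (by omega) (by unfold bedge; omega) ht1
    have hne6 : x6 ≠ 2*m+2 := fun h =>
      hinj (2*m+6) (2*m+2) (by omega) (by omega) (by omega) (by rw [hx6, hb1, h])
    have hne7 : x7 ≠ 2*m+2 := fun h =>
      hinj (2*m+7) (2*m+2) (by omega) (by omega) (by omega) (by rw [hx7, hb1, h])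
    have hne67 : x6 ≠ x7 := fun h =>
      hinj (2*m+6) (2*m+7) (by omega) (by omega) (by omega) (by rw [hx6, hx7, h])
    have hcase : (x6 = 2*m+6 ∧ x7 = 2*m+7) ∨ (x6 = 2*m+7 ∧ x7 = 2*m+6) := by
      have c6 := Dc hd6; have c7 := Dc hd7; unfold bedge at c6 c7; omega
    rcases hcase with ⟨h6, h7⟩ | ⟨h6, h7⟩
    · left; rw [hx6, hx7, h6, h7]; exact ⟨rfl, rfl⟩
    · right; rw [hx6, hx7, h6, h7]; exact ⟨rfl, rfl⟩
  · -- m > n : impossible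
    exfalso
    obtain ⟨ht1, hb1⟩ := main (n+1) (by omega) (by omega) (by omega)
    obtain ⟨x6, hx6, hd6⟩ :=
      step (2*n+6) (n+1) (n+1) (by omega) (by omega) (by unfold bedge; omega) ht1
    obtain ⟨x7, hx7, hd7⟩ :=
      step (2*n+7) (n+1) (n+1) (by omega) (by omega) (by unfold bedge; omega) ht1
    have hne6 : x6 ≠ m+1+(n+1) := fun h =>
      hinj (2*n+6) (n+1+(n+1)) (by omega) (by omega) (by omega) (by rw [hx6, hb1, h])
    have hne7 : x7 ≠ m+1+(n+1) := fun h =>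
      hinj (2*n+7) (n+1+(n+1)) (by omega) (by omega) (by omega) (by rw [hx7, hb1, h])
    have hne67 : x6 ≠ x7 := fun h =>
      hinj (2*n+6) (2*n+7) (by omega) (by omega) (by omega) (by rw [hx6, hx7, h])
    have c6 := Dc hd6; have c7 := Dc hd7
    unfold bedge at c6 c7; omega
/-! ### Computability infrastructure -/

/-- Decoding the `i`-th entry of a natural coding an infinite sequence. -/
def get (t i : ℕ) : ℕ := ((fun x : ℕ => x.unpair.2)^[i] t).unpair.1

lemma get_zero (t : ℕ) : get t 0 = t.unpair.1 := rfl

lemma get_succ (a b i : ℕ) : get (Nat.pair a b) (i+1) = get b i := by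
  simp [get, Function.iterate_succ_apply, Nat.unpair_pair]

lemma exists_code : ∀ (N : ℕ) (g : ℕ → ℕ), ∃ t, ∀ i < N, get t i = g i := by
  intro N
  induction N with
  | zero => exact fun g => ⟨0, by omega⟩
  | succ N ih =>
    intro g
    obtain ⟨t', ht'⟩ := ih fun i => g (i+1)
    refine ⟨Nat.pair (g 0) t', fun i hi => ?_⟩
    cases i with
    | zero => simp [get_zero, Nat.unpair_pair]
    | succ i => rw [get_succ]; exact ht' i (by omega)

lemma get_primrec : Primrec₂ get := by
  have h1 : Primrec fun p : ℕ × ℕ => (fun x : ℕ => x.unpair.2)^[p.2] p.1 :=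
    Primrec.nat_iterate Primrec.snd Primrec.fst
      (Primrec.to₂ ((Primrec.snd.comp Primrec.unpair).comp Primrec.snd))
  exact Primrec.to₂ ((Primrec.fst.comp Primrec.unpair).comp h1)

/-- Boolean version of `bedge`. -/
def bedgeB (n x y : ℕ) : Bool :=
  ((decide (n+2 ≤ x) && decide (x ≤ 2*n+2)) && (decide (x = y+n+2) || decide (x = y+n+1))) ||
  (((decide (2*n+3 ≤ x) && decide (x ≤ 2*n+5)) && decide (y = 0)) ||
   ((decide (x = 2*n+6) || decide (x = 2*n+7)) && decide (y = n+1)))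

lemma bedgeB_iff {n x y : ℕ} : bedgeB n x y = true ↔ bedge n x y := by
  simp [bedgeB, bedge, and_assoc]

lemma bedgeB_primrec : Primrec fun p : ℕ × ℕ × ℕ => bedgeB p.1 p.2.1 p.2.2 := by
  have pn : Primrec fun p : ℕ × ℕ × ℕ => p.1 := Primrec.fst
  have px : Primrec fun p : ℕ × ℕ × ℕ => p.2.1 := Primrec.fst.comp Primrec.snd
  have py : Primrec fun p : ℕ × ℕ × ℕ => p.2.2 := Primrec.snd.comp Primrec.snd
  have add : ∀ {f g : ℕ × ℕ × ℕ → ℕ}, Primrec f → Primrec g → Primrec fun p => f p + g p :=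
    fun hf hg => Primrec.nat_add.comp hf hg
  have mul2 : Primrec fun p : ℕ × ℕ × ℕ => 2*p.1 :=
    Primrec.nat_mul.comp (Primrec.const 2) pn
  have a1 : Primrec fun p : ℕ × ℕ × ℕ => decide (p.1+2 ≤ p.2.1) :=
    (Primrec.nat_le.comp (add pn (Primrec.const 2)) px).decide
  have a2 : Primrec fun p : ℕ × ℕ × ℕ => decide (p.2.1 ≤ 2*p.1+2) :=
    (Primrec.nat_le.comp px (add mul2 (Primrec.const 2))).decide
  have a3 : Primrec fun p : ℕ × ℕ × ℕ => decide (p.2.1 = p.2.2+p.1+2) :=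
    (Primrec.eq.comp px (add (add py pn) (Primrec.const 2))).decide
  have a4 : Primrec fun p : ℕ × ℕ × ℕ => decide (p.2.1 = p.2.2+p.1+1) :=
    (Primrec.eq.comp px (add (add py pn) (Primrec.const 1))).decide
  have a5 : Primrec fun p : ℕ × ℕ × ℕ => decide (2*p.1+3 ≤ p.2.1) :=
    (Primrec.nat_le.comp (add mul2 (Primrec.const 3)) px).decide
  have a6 : Primrec fun p : ℕ × ℕ × ℕ => decide (p.2.1 ≤ 2*p.1+5) :=
    (Primrec.nat_le.comp px (add mul2 (Primrec.const 5))).decide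
  have a7 : Primrec fun p : ℕ × ℕ × ℕ => decide (p.2.2 = 0) :=
    (Primrec.eq.comp py (Primrec.const 0)).decide
  have a8 : Primrec fun p : ℕ × ℕ × ℕ => decide (p.2.1 = 2*p.1+6) :=
    (Primrec.eq.comp px (add mul2 (Primrec.const 6))).decide
  have a9 : Primrec fun p : ℕ × ℕ × ℕ => decide (p.2.1 = 2*p.1+7) :=
    (Primrec.eq.comp px (add mul2 (Primrec.const 7))).decide
  have a10 : Primrec fun p : ℕ × ℕ × ℕ => decide (p.2.2 = p.1+1) :=
    (Primrec.eq.comp py (add pn (Primrec.const 1))).decide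
  exact Primrec.or.comp
    (Primrec.and.comp (Primrec.and.comp a1 a2) (Primrec.or.comp a3 a4))
    (Primrec.or.comp
      (Primrec.and.comp (Primrec.and.comp a5 a6) a7)
      (Primrec.and.comp (Primrec.or.comp a8 a9) a10))

/-- Stage-`s` approximation of `K0`. -/
def KB (n s : ℕ) : Bool := (evaln s (Denumerable.ofNat Code n) 0).isSome

lemma KB_primrec : Primrec₂ KB := by
  have h : Primrec fun p : ℕ × ℕ =>
      evaln ((p.2, Denumerable.ofNat Code p.1), 0).1.1 ((p.2, Denumerable.ofNat Code p.1), 0).1.2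
        ((p.2, Denumerable.ofNat Code p.1), 0).2 :=
    primrec_evaln.comp
      ((Primrec.snd.pair ((Primrec.ofNat Code).comp Primrec.fst)).pair (Primrec.const 0))
  exact Primrec.to₂ (Primrec.option_isSome.comp h)

lemma K0_iff (n : ℕ) : K0 n ↔ ∃ s, KB n s = true := by
  unfold K0 KB
  rw [Part.dom_iff_mem]
  constructor
  · rintro ⟨x, hx⟩
    obtain ⟨k, hk⟩ := evaln_complete.1 hx
    exact ⟨k, Option.isSome_iff_exists.2 ⟨x, hk⟩⟩
  · rintro ⟨s, hs⟩
    obtain ⟨x, hx⟩ := Option.isSome_iff_exists.1 hs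
    exact ⟨x, evaln_complete.2 ⟨s, hx⟩⟩

/-- Stage-`s` approximation of the coded set of `P0`. -/
def PB (m s : ℕ) : Bool :=
  decide (m.unpair.1 = m.unpair.2) ||
  (decide (m.unpair.1.unpair.1 = m.unpair.2.unpair.1) &&
    (bedgeB m.unpair.1.unpair.1 m.unpair.1.unpair.2 m.unpair.2.unpair.2 ||
      ((decide (m.unpair.1.unpair.2 = 2*m.unpair.1.unpair.1+7) &&
        decide (m.unpair.2.unpair.2 = 2*m.unpair.1.unpair.1+6)) && KB m.unpair.1.unpair.1 s)))

lemma PB_iff (m : ℕ) : (∃ s, PB m s = true) ↔ P0 m.unpair.1 m.unpair.2 := by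
  unfold PB P0
  constructor
  · rintro ⟨s, hs⟩
    simp only [Bool.or_eq_true, Bool.and_eq_true, decide_eq_true_eq, bedgeB_iff] at hs
    rcases hs with h | ⟨h1, h2 | ⟨⟨h3, h4⟩, h5⟩⟩
    · exact Or.inl h
    · exact Or.inr ⟨h1, Or.inl h2⟩
    · exact Or.inr ⟨h1, Or.inr ⟨h3, h4, (K0_iff _).2 ⟨s, h5⟩⟩⟩
  · intro h
    rcases h with h | ⟨h1, h2 | ⟨h3, h4, h5⟩⟩
    · exact ⟨0, by simp only [Bool.or_eq_true, decide_eq_true_eq]; exact Or.inl h⟩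
    · refine ⟨0, ?_⟩
      simp only [Bool.or_eq_true, Bool.and_eq_true, decide_eq_true_eq, bedgeB_iff]
      exact Or.inr ⟨h1, Or.inl h2⟩
    · obtain ⟨s, hs⟩ := (K0_iff _).1 h5
      refine ⟨s, ?_⟩
      simp only [Bool.or_eq_true, Bool.and_eq_true, decide_eq_true_eq, bedgeB_iff]
      exact Or.inr ⟨h1, Or.inr ⟨⟨h3, h4⟩, hs⟩⟩

set_option maxHeartbeats 1000000 in
lemma PB_primrec : Primrec₂ PB := by
  have key : Primrec fun p : ℕ × ℕ => PB p.1 p.2 := by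
    unfold PB
    have pm : Primrec fun p : ℕ × ℕ => p.1 := Primrec.fst
    have pu : Primrec fun p : ℕ × ℕ => p.1.unpair.1 := Primrec.fst.comp (Primrec.unpair.comp pm)
    have pv : Primrec fun p : ℕ × ℕ => p.1.unpair.2 := Primrec.snd.comp (Primrec.unpair.comp pm)
    have pn : Primrec fun p : ℕ × ℕ => p.1.unpair.1.unpair.1 :=
      Primrec.fst.comp (Primrec.unpair.comp pu)
    have px : Primrec fun p : ℕ × ℕ => p.1.unpair.1.unpair.2 :=
      Primrec.snd.comp (Primrec.unpair.comp pu)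
    have pn' : Primrec fun p : ℕ × ℕ => p.1.unpair.2.unpair.1 :=
      Primrec.fst.comp (Primrec.unpair.comp pv)
    have py : Primrec fun p : ℕ × ℕ => p.1.unpair.2.unpair.2 :=
      Primrec.snd.comp (Primrec.unpair.comp pv)
    have h1 : Primrec fun p : ℕ × ℕ => decide (p.1.unpair.1 = p.1.unpair.2) :=
      (Primrec.eq.comp pu pv).decide
    have h2 : Primrec fun p : ℕ × ℕ => decide (p.1.unpair.1.unpair.1 = p.1.unpair.2.unpair.1) :=
      (Primrec.eq.comp pn pn').decide
    have h3 : Primrec fun p : ℕ × ℕ =>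
      bedgeB p.1.unpair.1.unpair.1 p.1.unpair.1.unpair.2 p.1.unpair.2.unpair.2 :=
      bedgeB_primrec.comp (pn.pair (px.pair py))
    have lin : ∀ (c : ℕ), Primrec fun p : ℕ × ℕ => 2*p.1.unpair.1.unpair.1+c := fun c =>
      Primrec.nat_add.comp (Primrec.nat_mul.comp (Primrec.const 2) pn) (Primrec.const c)
    have h4 : Primrec fun p : ℕ × ℕ => decide (p.1.unpair.1.unpair.2 = 2*p.1.unpair.1.unpair.1+7) :=
      (Primrec.eq.comp px (lin 7)).decide
    have h5 : Primrec fun p : ℕ × ℕ => decide (p.1.unpair.2.unpair.2 = 2*p.1.unpair.1.unpair.1+6) :=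
      (Primrec.eq.comp py (lin 6)).decide
    have h6 : Primrec fun p : ℕ × ℕ => KB p.1.unpair.1.unpair.1 p.2 :=
      KB_primrec.comp pn Primrec.snd
    exact Primrec.or.comp h1 <| Primrec.and.comp h2 <| Primrec.or.comp h3 <|
      Primrec.and.comp (Primrec.and.comp h4 h5) h6
  exact key

/-- `P0` is c.e. -/
lemma P0_ce : SetCE (codedSet P0) := by
  unfold SetCE REPred
  have hc : Computable fun p : ℕ × ℕ => (cond (PB p.1 p.2) (some ()) none : Option Unit) :=
    Computable.cond PB_primrec.to_comp (Computable.const (some ())) (Computable.const none)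
  have h1 : Partrec fun m : ℕ => Nat.rfindOpt fun s => cond (PB m s) (some ()) none :=
    Partrec.rfindOpt hc.to₂
  refine h1.of_eq fun m => Part.ext' ?_ fun _ _ => Subsingleton.elim _ _
  rw [Nat.rfindOpt_dom]
  show _ ↔ ∃ _ : m ∈ codedSet P0, True
  constructor
  · rintro ⟨s, a, ha⟩
    refine ⟨?_, trivial⟩
    have hPB : PB m s = true := by
      by_contra hf
      rw [Bool.not_eq_true] at hf
      rw [hf] at ha
      simp at ha
    exact (PB_iff m).1 ⟨s, hPB⟩
  · rintro ⟨h, -⟩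
    obtain ⟨s, hs⟩ := (PB_iff m).2 h
    exact ⟨s, (), by rw [hs]; simp⟩
/-- One cell of the verification matrix. -/
def cellOK (cq : ℕ → Bool) (n t c : ℕ) : Bool :=
  (decide (c / (2*n+8) = c % (2*n+8)) ||
    !(decide (get t (c / (2*n+8)) = get t (c % (2*n+8))))) &&
  (!(bedgeB n (c / (2*n+8)) (c % (2*n+8))) ||
    cq (Nat.pair (get t (c / (2*n+8))) (get t (c % (2*n+8)))))

/-- Verify a coded tuple `t` as a candidate configuration for component `n`. -/
def chk (cq : ℕ → Bool) (n t : ℕ) : Bool :=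
  Nat.rec true (fun c acc => acc && cellOK cq n t c) ((2*n+8) * (2*n+8))

/-- The answer read off from a verified tuple. -/
def ansF (cq : ℕ → Bool) (n t : ℕ) : Bool :=
  cq (Nat.pair (get t (2*n+7)) (get t (2*n+6))) ||
  cq (Nat.pair (get t (2*n+6)) (get t (2*n+7)))

/-- The search step. -/
def F (cq : ℕ → Bool) (n t : ℕ) : Option Bool :=
  cond (chk cq n t) (some (ansF cq n t)) none

lemma cellOK_iff {cq : ℕ → Bool} {n t c : ℕ} :
    cellOK cq n t c = true ↔
      ((c / (2*n+8) = c % (2*n+8) ∨ get t (c / (2*n+8)) ≠ get t (c % (2*n+8))) ∧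
       (bedge n (c / (2*n+8)) (c % (2*n+8)) →
         cq (Nat.pair (get t (c / (2*n+8))) (get t (c % (2*n+8)))) = true)) := by
  unfold cellOK
  rw [Bool.and_eq_true, Bool.or_eq_true, Bool.or_eq_true]
  simp only [Bool.not_eq_true', decide_eq_true_eq, decide_eq_false_iff_not]
  constructor
  · rintro ⟨h1, h2⟩
    refine ⟨h1, fun hb => ?_⟩
    rcases h2 with h2 | h2
    · exact absurd (bedgeB_iff.mpr hb) (by rw [h2]; simp)
    · exact h2
  · rintro ⟨h1, h2⟩
    refine ⟨h1, ?_⟩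
    by_cases hb : bedge n (c / (2*n+8)) (c % (2*n+8))
    · exact Or.inr (h2 hb)
    · left
      rw [← Bool.not_eq_true]
      intro hc
      exact hb (bedgeB_iff.mp hc)

lemma natrec_all_iff (g : ℕ → Bool) :
    ∀ M, ((Nat.rec true (fun c acc => acc && g c) M : Bool) = true) ↔ ∀ c < M, g c = true := by
  intro M
  induction M with
  | zero => simp
  | succ M ih =>
    show ((Nat.rec true (fun c acc => acc && g c) M : Bool) && g M) = true ↔ _
    rw [Bool.and_eq_true, ih, Nat.forall_lt_succ_right]

lemma chk_iff {cq : ℕ → Bool} {n t : ℕ} :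
    chk cq n t = true ↔ ∀ i j, i < 2*n+8 → j < 2*n+8 →
      ((i = j ∨ get t i ≠ get t j) ∧
       (bedge n i j → cq (Nat.pair (get t i) (get t j)) = true)) := by
  unfold chk
  rw [natrec_all_iff]
  constructor
  · intro h i j hi hj
    have hc : (2*n+8) * i + j < (2*n+8) * (2*n+8) := by
      have h1 : (2*n+8) * i + j < (2*n+8) * (i+1) := by
        rw [Nat.mul_succ]; omega
      have h2 : (2*n+8) * (i+1) ≤ (2*n+8) * (2*n+8) := Nat.mul_le_mul_left _ (by omega)
      omega
    have hcell := cellOK_iff.mp (h _ hc)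
    have ediv : ((2*n+8) * i + j) / (2*n+8) = i := by
      rw [Nat.mul_add_div (by omega), Nat.div_eq_of_lt hj, Nat.add_zero]
    have emod : ((2*n+8) * i + j) % (2*n+8) = j := by
      rw [Nat.mul_add_mod, Nat.mod_eq_of_lt hj]
    rw [ediv, emod] at hcell
    exact hcell
  · intro h c hc
    rw [cellOK_iff]
    exact h _ _ ((Nat.div_lt_iff_lt_mul (by omega)).mpr hc) (Nat.mod_lt _ (by omega))

lemma cellOK_computable {α : Type} [Primcodable α] {cq : ℕ → Bool} (hcq : Computable cq)
    {fn ft fc : α → ℕ} (hn : Primrec fn) (ht : Primrec ft) (hc : Primrec fc) :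
    Computable fun a : α => cellOK cq (fn a) (ft a) (fc a) := by
  unfold cellOK
  have pN : Primrec fun a : α => 2*(fn a)+8 :=
    Primrec.nat_add.comp (Primrec.nat_mul.comp (Primrec.const 2) hn) (Primrec.const 8)
  have pi : Primrec fun a : α => (fc a) / (2*(fn a)+8) := Primrec.nat_div.comp hc pN
  have pj : Primrec fun a : α => (fc a) % (2*(fn a)+8) := Primrec.nat_mod.comp hc pN
  have gi : Primrec fun a : α => get (ft a) ((fc a) / (2*(fn a)+8)) :=
    get_primrec.comp ht pi
  have gj : Primrec fun a : α => get (ft a) ((fc a) % (2*(fn a)+8)) :=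
    get_primrec.comp ht pj
  have d1 : Primrec fun a : α => decide ((fc a) / (2*(fn a)+8) = (fc a) % (2*(fn a)+8)) :=
    (Primrec.eq.comp pi pj).decide
  have d2 : Primrec fun a : α =>
      !(decide (get (ft a) ((fc a) / (2*(fn a)+8)) = get (ft a) ((fc a) % (2*(fn a)+8)))) :=
    Primrec.not.comp (Primrec.eq.comp gi gj).decide
  have nb : Primrec fun a : α =>
      !(bedgeB (fn a) ((fc a) / (2*(fn a)+8)) ((fc a) % (2*(fn a)+8))) :=
    Primrec.not.comp (bedgeB_primrec.comp (hn.pair (pi.pair pj)))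
  have pr : Primrec fun a : α =>
      Nat.pair (get (ft a) ((fc a) / (2*(fn a)+8))) (get (ft a) ((fc a) % (2*(fn a)+8))) :=
    Primrec₂.natPair.comp gi gj
  exact Primrec.and.to_comp.comp ((Primrec.or.comp d1 d2).to_comp)
    (Primrec.or.to_comp.comp nb.to_comp (hcq.comp pr.to_comp))

set_option maxHeartbeats 1000000 in
lemma chk_computable {cq : ℕ → Bool} (hcq : Computable cq) : Computable₂ (chk cq) := by
  have key : Computable fun p : ℕ × ℕ => chk cq p.1 p.2 := by
    unfold chk
    have h1 : Primrec fun p : ℕ × ℕ => 2*p.1+8 :=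
      Primrec.nat_add.comp (Primrec.nat_mul.comp (Primrec.const 2) Primrec.fst)
        (Primrec.const 8)
    have hf : Computable fun p : ℕ × ℕ => (2*p.1+8) * (2*p.1+8) :=
      (Primrec.nat_mul.comp h1 h1).to_comp
    have hc1 : Computable fun r : (ℕ × ℕ) × ℕ × Bool => r.2.2 :=
      (Primrec.snd.comp Primrec.snd).to_comp
    have hc2 : Computable fun r : (ℕ × ℕ) × ℕ × Bool => cellOK cq r.1.1 r.1.2 r.2.1 :=
      cellOK_computable hcq (Primrec.fst.comp Primrec.fst) (Primrec.snd.comp Primrec.fst)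
        (Primrec.fst.comp Primrec.snd)
    have hh : Computable₂ fun (p : ℕ × ℕ) (q : ℕ × Bool) => q.2 && cellOK cq p.1 p.2 q.1 :=
      Primrec.and.to_comp.comp hc1 hc2
    exact Computable.nat_rec hf (Computable.const true) hh
  exact key

set_option maxHeartbeats 1000000 in
lemma ansF_computable {cq : ℕ → Bool} (hcq : Computable cq) : Computable₂ (ansF cq) := by
  have key : Computable fun p : ℕ × ℕ => ansF cq p.1 p.2 := by
    unfold ansF
    have e6 : Primrec fun p : ℕ × ℕ => 2*p.1+6 :=
      Primrec.nat_add.comp (Primrec.nat_mul.comp (Primrec.const 2) Primrec.fst)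
        (Primrec.const 6)
    have e7 : Primrec fun p : ℕ × ℕ => 2*p.1+7 :=
      Primrec.nat_add.comp (Primrec.nat_mul.comp (Primrec.const 2) Primrec.fst)
        (Primrec.const 7)
    have g6 : Primrec fun p : ℕ × ℕ => get p.2 (2*p.1+6) := get_primrec.comp Primrec.snd e6
    have g7 : Primrec fun p : ℕ × ℕ => get p.2 (2*p.1+7) := get_primrec.comp Primrec.snd e7
    exact Primrec.or.to_comp.comp (hcq.comp (Primrec₂.natPair.comp g7 g6).to_comp)
      (hcq.comp (Primrec₂.natPair.comp g6 g7).to_comp)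
  exact key

set_option maxHeartbeats 1000000 in
lemma F_computable {cq : ℕ → Bool} (hcq : Computable cq) : Computable₂ (F cq) := by
  have key : Computable fun p : ℕ × ℕ => F cq p.1 p.2 := by
    unfold F
    exact Computable.cond (chk_computable hcq)
      (Computable.option_some.comp (ansF_computable hcq)) (Computable.const none)
  exact key
theorem exists_CE_partialOrder_not_iso_computable :
    ∃ P : ℕ → ℕ → Prop, PartialOrderRel P ∧ SetCE (codedSet P) ∧
      ∀ Q : ℕ → ℕ → Prop, PartialOrderRel Q → SetComputable (codedSet Q) → ¬ Isomorphic P Q := by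
  classical
  refine ⟨P0, P0_po, P0_ce, ?_⟩
  rintro Q - hQc ⟨f, hfb, hf⟩
  obtain ⟨cq, hcq, hcqs⟩ := ComputablePred.computable_iff.1 hQc
  have hcq_iff : ∀ x y : ℕ, Q x y ↔ cq (Nat.pair x y) = true := by
    intro x y
    have h1 := congrFun hcqs (Nat.pair x y)
    have h2 : (Nat.pair x y ∈ codedSet Q) ↔ Q x y := by
      simp [codedSet, Nat.unpair_pair, Set.mem_setOf_eq]
    exact h2.symm.trans (iff_of_eq h1)
  obtain ⟨g, hgl, hgr⟩ := Function.bijective_iff_has_inverse.mp hfb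
  have hfg : ∀ x, f (g x) = x := hgr
  have hginj : Function.Injective g := fun a b h => by rw [← hfg a, ← hfg b, h]
  -- correctness of any verified tuple
  have hcorrect : ∀ n t, chk cq n t = true → ansF cq n t = decide (K0 n) := by
    intro n t hchk
    have hall := chk_iff.mp hchk
    have hfρ : ∀ i, f (g (get t i)) = get t i := fun i => hfg _
    have hinj : ∀ i j, i < 2*n+8 → j < 2*n+8 → i ≠ j →
        (fun i => g (get t i)) i ≠ (fun i => g (get t i)) j := by
      intro i j hi hj hij
      rcases (hall i j hi hj).1 with h | h
      · exact absurd h hij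
      · exact fun he => h (hginj he)
    have hedge : ∀ i j, i < 2*n+8 → j < 2*n+8 → bedge n i j →
        P0 ((fun i => g (get t i)) i) ((fun i => g (get t i)) j) := by
      intro i j hi hj hb
      have hq : cq (Nat.pair (get t i) (get t j)) = true := (hall i j hi hj).2 hb
      have hQ : Q (get t i) (get t j) := (hcq_iff _ _).mpr hq
      rw [← hfρ i, ← hfρ j] at hQ
      exact (hf _ _).mpr hQ
    have hans : ansF cq n t = true ↔ K0 n := by
      rcases rigid n (fun i => g (get t i)) hinj hedge with ⟨h6, h7⟩ | ⟨h6, h7⟩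
      · unfold ansF
        rw [Bool.or_eq_true]
        constructor
        · rintro (h | h)
          · have hQ : Q (get t (2*n+7)) (get t (2*n+6)) := (hcq_iff _ _).mpr h
            rw [← hfρ (2*n+7), ← hfρ (2*n+6)] at hQ
            have := (hf _ _).mpr hQ
            rw [h6, h7] at this
            exact (P0_rr n).mp this
          · have hQ : Q (get t (2*n+6)) (get t (2*n+7)) := (hcq_iff _ _).mpr h
            rw [← hfρ (2*n+6), ← hfρ (2*n+7)] at hQ
            have := (hf _ _).mpr hQ
            rw [h6, h7] at this
            exact absurd this (P0_rr' n)
        · intro hK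
          left
          have hP : P0 (Nat.pair n (2*n+7)) (Nat.pair n (2*n+6)) := (P0_rr n).mpr hK
          rw [← h7, ← h6] at hP
          have hQ := (hf _ _).mp hP
          rw [hfρ (2*n+7), hfρ (2*n+6)] at hQ
          exact (hcq_iff _ _).mp hQ
      · unfold ansF
        rw [Bool.or_eq_true]
        constructor
        · rintro (h | h)
          · have hQ : Q (get t (2*n+7)) (get t (2*n+6)) := (hcq_iff _ _).mpr h
            rw [← hfρ (2*n+7), ← hfρ (2*n+6)] at hQ
            have := (hf _ _).mpr hQ
            rw [h6, h7] at this
            exact absurd this (P0_rr' n)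
          · have hQ : Q (get t (2*n+6)) (get t (2*n+7)) := (hcq_iff _ _).mpr h
            rw [← hfρ (2*n+6), ← hfρ (2*n+7)] at hQ
            have := (hf _ _).mpr hQ
            rw [h6, h7] at this
            exact (P0_rr n).mp this
        · intro hK
          right
          have hP : P0 (Nat.pair n (2*n+7)) (Nat.pair n (2*n+6)) := (P0_rr n).mpr hK
          rw [← h6, ← h7] at hP
          have hQ := (hf _ _).mp hP
          rw [hfρ (2*n+6), hfρ (2*n+7)] at hQ
          exact (hcq_iff _ _).mp hQ
    by_cases hK : K0 n
    · rw [hans.mpr hK, decide_eq_true hK]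
    · have h1 : ansF cq n t = false := by
        cases hv : ansF cq n t
        · rfl
        · exact absurd (hans.mp hv) hK
      rw [h1, decide_eq_false hK]
  -- the search always succeeds with the right answer
  have hmem : ∀ n : ℕ, (decide (K0 n)) ∈ Nat.rfindOpt (F cq n) := by
    intro n
    obtain ⟨t0, ht0⟩ := exists_code (2*n+8) fun i => f (Nat.pair n i)
    have hchk0 : chk cq n t0 = true := by
      rw [chk_iff]
      intro i j hi hj
      constructor
      · by_cases hij : i = j
        · exact Or.inl hij
        · refine Or.inr ?_
          rw [ht0 i hi, ht0 j hj]
          intro he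
          exact hij (Nat.pair_eq_pair.mp (hfb.1 he)).2
      · intro hb
        rw [ht0 i hi, ht0 j hj]
        exact (hcq_iff _ _).mp ((hf _ _).mp (P0_of_bedge hb))
    have hdom : (Nat.rfindOpt (F cq n)).Dom :=
      Nat.rfindOpt_dom.2 ⟨t0, ansF cq n t0, by unfold F; rw [hchk0]; simp⟩
    obtain ⟨a, ha⟩ := Part.dom_iff_mem.1 hdom
    obtain ⟨t, ht⟩ := Nat.rfindOpt_spec ha
    have hchk : chk cq n t = true := by
      by_contra hc
      rw [Bool.not_eq_true] at hc
      unfold F at ht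
      rw [hc] at ht
      simp at ht
    have hat : a = decide (K0 n) := by
      unfold F at ht
      rw [hchk] at ht
      simp only [Option.mem_def, cond_true, Option.some_inj] at ht
      rw [← ht]
      exact hcorrect n t hchk
    rw [← hat]
    exact ha
  have hKcomp : Computable fun n => decide (K0 n) :=
    (Partrec.rfindOpt (F_computable hcq)).of_eq_tot hmem
  have hKpred : ComputablePred K0 := ⟨fun n => Classical.propDecidable _, by
    convert hKcomp using 2⟩
  obtain ⟨b, hb, hKb⟩ := ComputablePred.computable_iff.1 hKpred
  have hhp : ComputablePred fun c : Code => (c.eval 0).Dom := by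
    refine ComputablePred.computable_iff.2
      ⟨fun c => b (Encodable.encode c), hb.comp Computable.encode, ?_⟩
    funext c
    have h1 := congrFun hKb (Encodable.encode c)
    rw [← h1]
    unfold K0
    rw [Denumerable.ofNat_encode]
  exact ComputablePred.halting_problem 0 hhp
end CEOrders
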